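/- arXiv:2110.13116 — 3 statements merged into one kernel-verified Lean document; each statement's English description precedes it below -/
import Mathlib

section
/- Fix ρ > 1 and τ > 1, and define for μ ∈ [0, 1/τ) the value T(μ) as the projection of τ-1 onto the interval [ln((ρ-2μ)/(μτ+ρ-μ-1)), ln((ρ-μ)/(μτ+ρ-μ-1))] (assumed nonempty). Then μ ↦ T(μ) is non-increasing. -/
open Real

theorem case3_T_antitone (ρ τ : ℝ) (hρ : 1 < ρ) (hτ : 1 < τ)
    (hne : ∀ μ ∈ Set.Ico (0:ℝ) (1 / τ),
      Real.log ((ρ - 2 * μ) / (μ * τ + ρ - μ - 1))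
        ≤ Real.log ((ρ - μ) / (μ * τ + ρ - μ - 1))) :
    AntitoneOn (fun μ : ℝ =>
      max (Real.log ((ρ - 2 * μ) / (μ * τ + ρ - μ - 1)))
        (min (τ - 1) (Real.log ((ρ - μ) / (μ * τ + ρ - μ - 1)))))
      (Set.Ico (0:ℝ) (1 / τ)) := by
  have hτ0 : (0:ℝ) < τ := by linarith
  have h1τ : 1 / τ < 1 := by rw [div_lt_one hτ0]; exact hτ
  -- Key consequence of hne : 3 ≤ 2ρτ
  have hkey : 3 ≤ 2 * ρ * τ := by
    by_contra hcon
    push_neg at hcon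
    set μ := (2 * ρ / 3 + 1 / τ) / 2 with hμdef
    have h23 : 2 * ρ / 3 < 1 / τ := by
      rw [div_lt_div_iff₀ (by norm_num) hτ0]; nlinarith
    have hμ1 : μ < 1 / τ := by rw [hμdef]; linarith
    have hμ2 : 2 * ρ / 3 < μ := by rw [hμdef]; linarith
    have hμ0 : 0 ≤ μ := by nlinarith
    have hd : 0 < μ * τ + ρ - μ - 1 := by nlinarith
    have hρμ : 0 < ρ - μ := by nlinarith
    have hne' := hne μ ⟨hμ0, hμ1⟩
    have hneg : 0 < 2 * μ - ρ := by nlinarith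
    rw [show (ρ - 2 * μ) / (μ * τ + ρ - μ - 1)
        = -((2 * μ - ρ) / (μ * τ + ρ - μ - 1)) by ring,
      Real.log_neg_eq_log] at hne'
    have h2 : (2 * μ - ρ) / (μ * τ + ρ - μ - 1) ≤ (ρ - μ) / (μ * τ + ρ - μ - 1) :=
      (Real.log_le_log_iff (by positivity) (by positivity)).mp hne'
    have h3 : 2 * μ - ρ ≤ ρ - μ := by
      have := (div_le_div_iff_of_pos_right hd).mp h2
      linarith
    nlinarith
  intro a ha b hb hab
  obtain ⟨ha0, ha1⟩ := ha
  obtain ⟨hb0, hb1⟩ := hb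
  have hbτ : b * τ < 1 := by
    calc b * τ < (1 / τ) * τ := by exact mul_lt_mul_of_pos_right hb1 hτ0
    _ = 1 := by field_simp
  have hda : 0 < a * τ + ρ - a - 1 := by nlinarith
  have hdb : 0 < b * τ + ρ - b - 1 := by nlinarith
  have hρb : 0 < ρ - b := by nlinarith
  have hρa : 0 < ρ - a := by nlinarith
  -- upper endpoint is antitone
  have hhi : Real.log ((ρ - b) / (b * τ + ρ - b - 1))
      ≤ Real.log ((ρ - a) / (a * τ + ρ - a - 1)) := by
    apply Real.log_le_log (by positivity)
    rw [div_le_div_iff₀ hdb hda]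
    nlinarith
  simp only
  rcases le_or_gt (ρ - 2 * b) 0 with hneg | hpos
  · -- lower endpoint at b is at most min (τ-1) (upper at a)
    have hlob_c : Real.log ((ρ - 2 * b) / (b * τ + ρ - b - 1)) ≤ τ - 1 := by
      rcases eq_or_lt_of_le hneg with heq | hlt
      · rw [heq, zero_div, Real.log_zero]
        linarith
      · rw [show (ρ - 2 * b) / (b * τ + ρ - b - 1)
            = -((2 * b - ρ) / (b * τ + ρ - b - 1)) by ring,
          Real.log_neg_eq_log]
        rw [Real.log_le_iff_le_exp (div_pos (by linarith) hdb)]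
        have hτexp : τ ≤ Real.exp (τ - 1) := by
          have := Real.add_one_le_exp (τ - 1)
          linarith
        have h4 : (2 * b - ρ) / (b * τ + ρ - b - 1) ≤ τ := by
          rw [div_le_iff₀ hdb]
          nlinarith [mul_nonneg hb0 hτ0.le, sq_nonneg (τ - 1),
            mul_nonneg (mul_nonneg hb0 hτ0.le) hτ0.le,
            mul_pos (sub_pos.mpr hτ) (sub_pos.mpr hρ)]
        linarith
    have hlob_hib := hne b ⟨hb0, hb1⟩
    have h1 : Real.log ((ρ - 2 * b) / (b * τ + ρ - b - 1))
        ≤ min (τ - 1) (Real.log ((ρ - a) / (a * τ + ρ - a - 1))) :=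
      le_min hlob_c (hlob_hib.trans hhi)
    exact max_le (h1.trans (le_max_right _ _))
      (((min_le_min le_rfl hhi).trans (le_max_right _ _)))
  · -- lower endpoint is antitone here
    have hlo : Real.log ((ρ - 2 * b) / (b * τ + ρ - b - 1))
        ≤ Real.log ((ρ - 2 * a) / (a * τ + ρ - a - 1)) := by
      apply Real.log_le_log (by positivity)
      rw [div_le_div_iff₀ hdb hda]
      nlinarith
    exact max_le_max hlo (min_le_min le_rfl hhi)
end

section
/- Suppose F and G are continuous CDFs of buying times for unit-cost ski rental with F(t) = G(t) for all t ≤ y, and G(t) > F(t) for all t ∈ (y, y'] where y' - y < 1. Let z ∈ (y, y'] maximize G(z) - F(z). Then the expected cost when the season ends at time z satisfies cost_G(z) > cost_F(z), where cost_H(x) = ∫₀^x (1+t) dH(t) + x(1 - H(x)). -/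
open Real MeasureTheory

/-- Expected cost of a unit-cost ski rental algorithm whose buying time has
CDF `H`, when the season ends at time `x`: buying at time `t ≤ x` costs `1+t`,
and otherwise rent `x` is paid. -/
noncomputable def skiCost (H : StieltjesFunction ℝ) (x : ℝ) : ℝ :=
  (∫ t in Set.Icc (0:ℝ) x, (1 + t) ∂H.measure) + x * (1 - H x)

open Set Filter Topology in
lemma cdf_zero_aux (H : StieltjesFunction ℝ) (hc : Continuous H)
    (hneg : ∀ t < (0:ℝ), H t = 0) : H 0 = 0 := by
  have h1 : Tendsto H (𝓝[<] (0:ℝ)) (𝓝 (H 0)) :=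
    (hc.tendsto 0).mono_left nhdsWithin_le_nhds
  have h2 : Tendsto H (𝓝[<] (0:ℝ)) (𝓝 0) := by
    apply Tendsto.congr' _ tendsto_const_nhds
    filter_upwards [self_mem_nhdsWithin] with t ht
    exact (hneg t ht).symm
  exact tendsto_nhds_unique h1 h2

open Set Filter Topology in
lemma skiCost_eq (H : StieltjesFunction ℝ) (hc : Continuous H)
    (hneg : ∀ t < (0:ℝ), H t = 0) {z : ℝ} (hz : 0 < z) :
    skiCost H z = z + H z - ∫ s in (0:ℝ)..z, H s := by
  have hleft : ∀ x : ℝ, Function.leftLim H x = H x := fun x =>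
    leftLim_eq_of_tendsto ((hc.tendsto x).mono_left nhdsWithin_le_nhds)
  have hH0 : H 0 = 0 := cdf_zero_aux H hc hneg
  have hμ0 : H.measure {0} = 0 := by
    rw [H.measure_singleton, hleft, sub_self, ENNReal.ofReal_zero]
  have hIcc : ∫ t in Icc (0:ℝ) z, (1 + t) ∂H.measure
      = ∫ t in Ioc (0:ℝ) z, (1 + t) ∂H.measure :=
    integral_Icc_eq_integral_Ioc' hμ0
  have hfin : H.measure (Ioc 0 z) < ⊤ := by
    rw [H.measure_Ioc]; exact ENNReal.ofReal_lt_top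
  have hint1 : IntegrableOn (fun _ : ℝ => (1:ℝ)) (Ioc 0 z) H.measure :=
    integrableOn_const hfin.ne
  have hintt : IntegrableOn (fun t : ℝ => t) (Ioc 0 z) H.measure :=
    (continuous_id.continuousOn.integrableOn_compact
      (isCompact_Icc (a := (0:ℝ)) (b := z))).mono_set Ioc_subset_Icc_self
  have hsplit : ∫ t in Ioc (0:ℝ) z, (1 + t) ∂H.measure
      = (∫ _t in Ioc (0:ℝ) z, (1:ℝ) ∂H.measure) + ∫ t in Ioc (0:ℝ) z, t ∂H.measure :=
    integral_add hint1 hintt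
  have hconst : ∫ _t in Ioc (0:ℝ) z, (1:ℝ) ∂H.measure = H z := by
    rw [setIntegral_const, measureReal_def, smul_eq_mul, mul_one, H.measure_Ioc, hH0, sub_zero,
      ENNReal.toReal_ofReal]
    have := H.mono hz.le
    linarith [hH0 ▸ this]
  have hkey : ∫ t in Ioc (0:ℝ) z, t ∂H.measure = ∫ t in Ioc (0:ℝ) z, (H z - H t) := by
    have hnn : 0 ≤ᵐ[H.measure.restrict (Ioc 0 z)] fun t : ℝ => t :=
      (ae_restrict_iff' measurableSet_Ioc).2 (Eventually.of_forall fun t ht => ht.1.le)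
    have hmble : AEMeasurable (fun t : ℝ => t) (H.measure.restrict (Ioc 0 z)) :=
      measurable_id.aemeasurable
    rw [integral_eq_lintegral_of_nonneg_ae hnn measurable_id.aestronglyMeasurable.restrict,
      lintegral_eq_lintegral_meas_lt _ hnn hmble]
    have h1 : ∫⁻ t in Ioi (0:ℝ), (H.measure.restrict (Ioc 0 z)) {a : ℝ | t < a}
        = ∫⁻ t in Ioi (0:ℝ), ENNReal.ofReal (H z - H t) := by
      apply setLIntegral_congr_fun measurableSet_Ioi
      intro t ht
      beta_reduce
      have : {a : ℝ | t < a} = Ioi t := rfl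
      rw [this, Measure.restrict_apply measurableSet_Ioi, Set.inter_comm,
        Set.Ioc_inter_Ioi, max_eq_right (le_of_lt ht), H.measure_Ioc]
    rw [h1]
    have hsplit2 : ∫⁻ t in Ioi (0:ℝ), ENNReal.ofReal (H z - H t)
        = ∫⁻ t in Ioc (0:ℝ) z, ENNReal.ofReal (H z - H t) := by
      rw [← Set.Ioc_union_Ioi_eq_Ioi hz.le,
        lintegral_union measurableSet_Ioi Set.Ioc_disjoint_Ioi_same]
      have : ∫⁻ t in Ioi z, ENNReal.ofReal (H z - H t) = 0 := by
        rw [← lintegral_zero (μ := volume.restrict (Ioi z))]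
        apply setLIntegral_congr_fun measurableSet_Ioi ?_
        intro t ht
        rw [ENNReal.ofReal_eq_zero]
        have := H.mono (le_of_lt ht)
        linarith
      rw [this, add_zero]
    rw [hsplit2]
    have hintv : IntegrableOn (fun t : ℝ => H z - H t) (Ioc 0 z) volume :=
      ((continuous_const.sub hc).continuousOn.integrableOn_compact
        (isCompact_Icc (a := (0:ℝ)) (b := z))).mono_set Ioc_subset_Icc_self
    have hnn2 : 0 ≤ᵐ[volume.restrict (Ioc (0:ℝ) z)] fun t : ℝ => H z - H t :=
      (ae_restrict_iff' measurableSet_Ioc).2 (Eventually.of_forall fun t ht => by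
        simp only [Pi.zero_apply]
        have := H.mono ht.2; linarith)
    rw [← ofReal_integral_eq_lintegral_ofReal hintv hnn2, ENNReal.toReal_ofReal]
    exact setIntegral_nonneg measurableSet_Ioc fun t ht => by
      have := H.mono ht.2; linarith
  have hioc : ∫ t in Ioc (0:ℝ) z, (H z - H t) = ∫ t in (0:ℝ)..z, (H z - H t) :=
    (intervalIntegral.integral_of_le hz.le).symm
  have hiv : ∫ t in (0:ℝ)..z, (H z - H t) = z * H z - ∫ s in (0:ℝ)..z, H s := by
    rw [intervalIntegral.integral_sub intervalIntegrable_const (hc.intervalIntegrable 0 z),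
      intervalIntegral.integral_const]
    simp [smul_eq_mul]
  unfold skiCost
  rw [hIcc, hsplit, hconst, hkey, hioc, hiv]
  ring

theorem cdf_above_has_higher_cost (F G : StieltjesFunction ℝ)
    (hFcont : Continuous F) (hGcont : Continuous G)
    (hFneg : ∀ t < (0:ℝ), F t = 0) (hGneg : ∀ t < (0:ℝ), G t = 0)
    (hF1 : ∀ t, F t ≤ 1) (hG1 : ∀ t, G t ≤ 1)
    (y y' z : ℝ) (hyy' : y < y') (hlen : y' - y < 1)
    (heq : ∀ t ≤ y, F t = G t)
    (hgt : ∀ t ∈ Set.Ioc y y', F t < G t)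
    (hz : z ∈ Set.Ioc y y')
    (hzmax : ∀ t ∈ Set.Ioc y y', G t - F t ≤ G z - F z) :
    skiCost F z < skiCost G z := by
  obtain ⟨hyz, hzy'⟩ := hz
  have hDz : 0 < G z - F z := sub_pos.2 (hgt z ⟨hyz, hzy'⟩)
  have hz0 : 0 < z := by
    by_contra h
    push_neg at h
    have hFz : F z = G z := by
      rcases lt_or_eq_of_le h with h' | h'
      · rw [hFneg z h', hGneg z h']
      · rw [h', cdf_zero_aux F hFcont hFneg, cdf_zero_aux G hGcont hGneg]
    linarith
  rw [skiCost_eq F hFcont hFneg hz0, skiCost_eq G hGcont hGneg hz0]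
  have key : (∫ s in (0:ℝ)..z, G s) - ∫ s in (0:ℝ)..z, F s < G z - F z := by
    rw [← intervalIntegral.integral_sub (hGcont.intervalIntegrable 0 z)
      (hFcont.intervalIntegrable 0 z)]
    set a := max y 0 with ha_def
    have ha0 : 0 ≤ a := le_max_right _ _
    have hay : y ≤ a := le_max_left _ _
    have haz : a ≤ z := max_le hyz.le hz0.le
    have hsub := hGcont.sub hFcont
    have hsplit : ∫ s in (0:ℝ)..z, (G s - F s)
        = (∫ s in (0:ℝ)..a, (G s - F s)) + ∫ s in a..z, (G s - F s) :=
      (intervalIntegral.integral_add_adjacent_intervals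
        (hsub.intervalIntegrable _ _) (hsub.intervalIntegrable _ _)).symm
    have h1 : ∫ s in (0:ℝ)..a, (G s - F s) = 0 := by
      rcases le_or_gt y 0 with hy0 | hy0
      · rw [ha_def, max_eq_right hy0, intervalIntegral.integral_same]
      · have ha : a = y := max_eq_left hy0.le
        rw [ha]
        have heqon : Set.EqOn (fun s => G s - F s) (fun _ => (0:ℝ)) (Set.uIcc 0 y) := by
          intro s hs
          rw [Set.uIcc_of_le hy0.le] at hs
          exact sub_eq_zero.2 (heq s hs.2).symm
        rw [intervalIntegral.integral_congr heqon, intervalIntegral.integral_zero]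
    have h2 : ∫ s in a..z, (G s - F s) ≤ (z - a) * (G z - F z) := by
      have hb : ∀ s ∈ Set.Icc a z, G s - F s ≤ G z - F z := by
        intro s hs
        rcases le_or_gt s y with hsy | hsy
        · rw [sub_eq_zero.2 (heq s hsy).symm]; exact hDz.le
        · exact hzmax s ⟨hsy, hs.2.trans hzy'⟩
      calc ∫ s in a..z, (G s - F s)
          ≤ ∫ _s in a..z, (G z - F z) :=
            intervalIntegral.integral_mono_on haz (hsub.intervalIntegrable _ _)
              intervalIntegrable_const hb
        _ = (z - a) * (G z - F z) := by
            rw [intervalIntegral.integral_const, smul_eq_mul]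
    have h3 : (z - a) * (G z - F z) ≤ (z - y) * (G z - F z) :=
      mul_le_mul_of_nonneg_right (by linarith) hDz.le
    have h4 : (z - y) * (G z - F z) < 1 * (G z - F z) :=
      mul_lt_mul_of_pos_right (by linarith) hDz
    rw [hsplit, h1, zero_add]
    linarith
  linarith [key]
end

section
/- Let k ≥ 1, with α₀ > ⋯ > α_k ≥ 0, 0 = β₀ < ⋯ < β_k, breakpoints t_j = (β_j-β_{j-1})/(α_{j-1}-α_j) with t_1 < ⋯ < t_k, and let ℓ ∈ [t_{j*}, t_{j*+1}). Suppose nonneg random variables A_1 ≤ ⋯ ≤ A_k satisfy, for each j, E[(β_j-β_{j-1})·1_{A_j ≤ ℓ} + (α_{j-1}-α_j)·min{A_j, ℓ}] ≤ ρ·min{(α_{j-1}-α_j)ℓ, β_j-β_{j-1}} + μ(α_{j-1}-α_j)|τ-ℓ|. Then the quantity C = β_J + Σ_{j=1}^{J}(A_j - A_{j-1})α_{j-1} + (ℓ - A_J)α_J, with J = max{j : A_j ≤ ℓ} and A₀ = 0, satisfies E[C] ≤ ρ(α_{j*}ℓ + β_{j*}) + μ(α₀ - α_k)|τ - ℓ|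 when ρ ≥ 1. -/
open Real MeasureTheory

theorem dpm_single_period_competitive
    {Ω : Type*} [MeasureSpace Ω]
    (hprob : IsProbabilityMeasure (volume : Measure Ω))
    (k : ℕ) (hk : 1 ≤ k) (α β t : ℕ → ℝ) (ℓ τ ρ μ : ℝ) (jstar : ℕ)
    (hα : ∀ j, j < k → α (j + 1) < α j) (hαk : 0 ≤ α k)
    (hβ0 : β 0 = 0) (hβ : ∀ j, j < k → β j < β (j + 1))
    (ht0 : t 0 = 0)
    (ht : ∀ j, 1 ≤ j → j ≤ k → t j = (β j - β (j - 1)) / (α (j - 1) - α j))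
    (htmono : ∀ j, 1 ≤ j → j < k → t j < t (j + 1))
    (hℓ : 0 ≤ ℓ)
    (hj1 : jstar ≤ k) (hj2 : t jstar ≤ ℓ) (hj3 : jstar < k → ℓ < t (jstar + 1))
    (hρ : 1 ≤ ρ)
    (A : ℕ → Ω → ℝ)
    (hA0 : ∀ ω, A 0 ω = 0)
    (hAnn : ∀ j ω, 0 ≤ A j ω)
    (hAmono : ∀ j ω, A j ω ≤ A (j + 1) ω)
    (hcompint : ∀ j, 1 ≤ j → j ≤ k →
      Integrable (fun ω => (if A j ω ≤ ℓ then β j - β (j - 1) else 0)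
        + (α (j - 1) - α j) * min (A j ω) ℓ))
    (hcomp : ∀ j, 1 ≤ j → j ≤ k →
      (∫ ω, ((if A j ω ≤ ℓ then β j - β (j - 1) else 0)
          + (α (j - 1) - α j) * min (A j ω) ℓ))
        ≤ ρ * min ((α (j - 1) - α j) * ℓ) (β j - β (j - 1))
          + μ * (α (j - 1) - α j) * |τ - ℓ|)
    (C : Ω → ℝ) (hCint : Integrable C)
    (hC : ∀ (ω : Ω) (J : ℕ), J ≤ k → A J ω ≤ ℓ →
      (∀ j ≤ k, A j ω ≤ ℓ → j ≤ J) →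
      C ω = β J + (∑ j ∈ Finset.range J, (A (j + 1) ω - A j ω) * α j)
        + (ℓ - A J ω) * α J) :
    (∫ ω, C ω) ≤ ρ * (α jstar * ℓ + β jstar) + μ * (α 0 - α k) * |τ - ℓ| := by
  classical
  have hρ0 : 0 ≤ ρ := le_trans zero_le_one hρ
  -- pointwise identity
  have hid : ∀ ω, C ω = α k * ℓ + ∑ j ∈ Finset.range k,
      ((if A (j+1) ω ≤ ℓ then β (j+1) - β j else 0)
        + (α j - α (j+1)) * min (A (j+1) ω) ℓ) := by
    intro ω
    have hmono : Monotone fun j => A j ω := monotone_nat_of_le_succ (fun j => hAmono j ω)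
    set J := Nat.findGreatest (fun j => A j ω ≤ ℓ) k with hJdef
    have hJk : J ≤ k := Nat.findGreatest_le k
    have hAJ : A J ω ≤ ℓ := by
      have h0 : A 0 ω ≤ ℓ := by rw [hA0]; exact hℓ
      exact Nat.findGreatest_spec (P := fun j => A j ω ≤ ℓ) (Nat.zero_le k) h0
    have hmax : ∀ j ≤ k, A j ω ≤ ℓ → j ≤ J := fun j hj hle => Nat.le_findGreatest hj hle
    rw [hC ω J hJk hAJ hmax]
    have hle : ∀ j ≤ J, A j ω ≤ ℓ := fun j hj => le_trans (hmono hj) hAJ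
    have hgt : ∀ j, J < j → j ≤ k → ℓ < A j ω := by
      intro j h1 h2
      by_contra h
      push_neg at h
      exact absurd (hmax j h2 h) (Nat.not_le.mpr h1)
    have hsplit : ∑ j ∈ Finset.range k,
        ((if A (j+1) ω ≤ ℓ then β (j+1) - β j else 0) + (α j - α (j+1)) * min (A (j+1) ω) ℓ)
        = (∑ j ∈ Finset.range J, ((β (j+1) - β j) + (α j - α (j+1)) * A (j+1) ω))
          + ∑ j ∈ Finset.Ico J k, (α j - α (j+1)) * ℓ := by
      rw [← Finset.sum_range_add_sum_Ico _ hJk]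
      congr 1
      · apply Finset.sum_congr rfl
        intro j hj
        simp only [Finset.mem_range] at hj
        have h1 : A (j+1) ω ≤ ℓ := hle (j+1) hj
        rw [if_pos h1, min_eq_left h1]
      · apply Finset.sum_congr rfl
        intro j hj
        simp only [Finset.mem_Ico] at hj
        have h1 : ℓ < A (j+1) ω := hgt (j+1) (Nat.lt_succ_of_le hj.1) hj.2
        rw [if_neg (not_le.mpr h1), min_eq_right h1.le, zero_add]
    rw [hsplit]
    have S1 : ∑ j ∈ Finset.range J, (β (j+1) - β j) = β J - β 0 :=
      Finset.sum_range_sub β J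
    have S2 : ∑ j ∈ Finset.range J, ((A (j+1) ω - A j ω) * α j - (α j - α (j+1)) * A (j+1) ω)
        = A J ω * α J - A 0 ω * α 0 := by
      rw [← Finset.sum_range_sub (fun j => A j ω * α j) J]
      apply Finset.sum_congr rfl
      intro j _
      ring
    have S3 : ∑ j ∈ Finset.Ico J k, (α j - α (j+1)) * ℓ = (α J - α k) * ℓ := by
      rw [← Finset.sum_mul]
      congr 1
      have h1 : ∑ j ∈ Finset.range J, (α j - α (j+1)) + ∑ j ∈ Finset.Ico J k, (α j - α (j+1))
          = ∑ j ∈ Finset.range k, (α j - α (j+1)) :=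
        Finset.sum_range_add_sum_Ico _ hJk
      have h2 : ∑ j ∈ Finset.range J, (α j - α (j+1)) = α 0 - α J :=
        Finset.sum_range_sub' α J
      have h3 : ∑ j ∈ Finset.range k, (α j - α (j+1)) = α 0 - α k :=
        Finset.sum_range_sub' α k
      linarith
    have S4 : ∑ j ∈ Finset.range J, ((β (j+1) - β j) + (α j - α (j+1)) * A (j+1) ω)
        = (β J - β 0) + ∑ j ∈ Finset.range J, (α j - α (j+1)) * A (j+1) ω := by
      rw [Finset.sum_add_distrib, S1]
    have S5 : ∑ j ∈ Finset.range J, (A (j+1) ω - A j ω) * α j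
        = (A J ω * α J - A 0 ω * α 0) + ∑ j ∈ Finset.range J, (α j - α (j+1)) * A (j+1) ω := by
      have := Finset.sum_sub_distrib (f := fun j => (A (j+1) ω - A j ω) * α j)
        (g := fun j => (α j - α (j+1)) * A (j+1) ω) (s := Finset.range J)
      rw [S2] at this
      linarith
    rw [hsplit] at *
    rw [S4, S5, S3, hA0, hβ0]
    ring
  -- integrate
  have hint : ∀ j ∈ Finset.range k, Integrable (fun ω =>
      (if A (j+1) ω ≤ ℓ then β (j+1) - β j else 0) + (α j - α (j+1)) * min (A (j+1) ω) ℓ) := by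
    intro j hj
    simp only [Finset.mem_range] at hj
    have := hcompint (j+1) (Nat.le_add_left 1 j) hj
    simpa using this
  have hCeq : (∫ ω, C ω) = α k * ℓ + ∑ j ∈ Finset.range k, ∫ ω,
      ((if A (j+1) ω ≤ ℓ then β (j+1) - β j else 0) + (α j - α (j+1)) * min (A (j+1) ω) ℓ) := by
    have := funext hid
    rw [show (fun ω => C ω) = C from rfl]
    calc ∫ ω, C ω = ∫ ω, (α k * ℓ + ∑ j ∈ Finset.range k,
        ((if A (j+1) ω ≤ ℓ then β (j+1) - β j else 0) + (α j - α (j+1)) * min (A (j+1) ω) ℓ)) := by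
          exact integral_congr_ae (Filter.Eventually.of_forall hid)
      _ = α k * ℓ + ∑ j ∈ Finset.range k, ∫ ω,
        ((if A (j+1) ω ≤ ℓ then β (j+1) - β j else 0) + (α j - α (j+1)) * min (A (j+1) ω) ℓ) := by
          rw [integral_add (integrable_const _) (integrable_finset_sum _ hint),
            integral_const, integral_finset_sum _ hint]
          simp
  rw [hCeq]
  have hbound : ∑ j ∈ Finset.range k, ∫ ω,
      ((if A (j+1) ω ≤ ℓ then β (j+1) - β j else 0) + (α j - α (j+1)) * min (A (j+1) ω) ℓ)
      ≤ ∑ j ∈ Finset.range k,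
        (ρ * min ((α j - α (j+1)) * ℓ) (β (j+1) - β j) + μ * (α j - α (j+1)) * |τ - ℓ|) := by
    apply Finset.sum_le_sum
    intro j hj
    simp only [Finset.mem_range] at hj
    have := hcomp (j+1) (Nat.le_add_left 1 j) hj
    simpa using this
  have hmusum : ∑ j ∈ Finset.range k, μ * (α j - α (j+1)) * |τ - ℓ|
      = μ * (α 0 - α k) * |τ - ℓ| := by
    have h3 : ∑ j ∈ Finset.range k, (α j - α (j+1)) = α 0 - α k :=
      Finset.sum_range_sub' α k
    calc ∑ j ∈ Finset.range k, μ * (α j - α (j+1)) * |τ - ℓ|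
        = (∑ j ∈ Finset.range k, (α j - α (j+1))) * (μ * |τ - ℓ|) := by
          rw [Finset.sum_mul]; apply Finset.sum_congr rfl; intro j _; ring
      _ = μ * (α 0 - α k) * |τ - ℓ| := by rw [h3]; ring
  have hminsum : ∑ j ∈ Finset.range k, min ((α j - α (j+1)) * ℓ) (β (j+1) - β j)
      ≤ β jstar + (α jstar - α k) * ℓ := by
    rw [← Finset.sum_range_add_sum_Ico _ hj1]
    have h1 : ∑ j ∈ Finset.range jstar, min ((α j - α (j+1)) * ℓ) (β (j+1) - β j)
        ≤ β jstar - β 0 := by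
      rw [← Finset.sum_range_sub β jstar]
      exact Finset.sum_le_sum (fun j _ => min_le_right _ _)
    have h2 : ∑ j ∈ Finset.Ico jstar k, min ((α j - α (j+1)) * ℓ) (β (j+1) - β j)
        ≤ (α jstar - α k) * ℓ := by
      have : ∑ j ∈ Finset.Ico jstar k, (α j - α (j+1)) * ℓ = (α jstar - α k) * ℓ := by
        rw [← Finset.sum_mul]
        congr 1
        have ha : ∑ j ∈ Finset.range jstar, (α j - α (j+1)) + ∑ j ∈ Finset.Ico jstar k, (α j - α (j+1))
            = ∑ j ∈ Finset.range k, (α j - α (j+1)) :=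
          Finset.sum_range_add_sum_Ico _ hj1
        have hb : ∑ j ∈ Finset.range jstar, (α j - α (j+1)) = α 0 - α jstar :=
          Finset.sum_range_sub' α jstar
        have hc : ∑ j ∈ Finset.range k, (α j - α (j+1)) = α 0 - α k :=
          Finset.sum_range_sub' α k
        linarith
      rw [← this]
      exact Finset.sum_le_sum (fun j _ => min_le_left _ _)
    linarith [hβ0]
  have hsumsplit : ∑ j ∈ Finset.range k,
      (ρ * min ((α j - α (j+1)) * ℓ) (β (j+1) - β j) + μ * (α j - α (j+1)) * |τ - ℓ|)
      = ρ * (∑ j ∈ Finset.range k, min ((α j - α (j+1)) * ℓ) (β (j+1) - β j))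
        + μ * (α 0 - α k) * |τ - ℓ| := by
    rw [Finset.sum_add_distrib, hmusum, Finset.mul_sum]
  have hfinal : α k * ℓ + (ρ * (β jstar + (α jstar - α k) * ℓ) + μ * (α 0 - α k) * |τ - ℓ|)
      ≤ ρ * (α jstar * ℓ + β jstar) + μ * (α 0 - α k) * |τ - ℓ| := by
    nlinarith [mul_nonneg (mul_nonneg hαk hℓ) (sub_nonneg.mpr hρ)]
  have := mul_le_mul_of_nonneg_left hminsum hρ0
  calc α k * ℓ + ∑ j ∈ Finset.range k, ∫ ω,
      ((if A (j+1) ω ≤ ℓ then β (j+1) - β j else 0) + (α j - α (j+1)) * min (A (j+1) ω) ℓ)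
      ≤ α k * ℓ + (ρ * (∑ j ∈ Finset.range k, min ((α j - α (j+1)) * ℓ) (β (j+1) - β j))
        + μ * (α 0 - α k) * |τ - ℓ|) := by rw [← hsumsplit]; linarith [hbound]
    _ ≤ α k * ℓ + (ρ * (β jstar + (α jstar - α k) * ℓ) + μ * (α 0 - α k) * |τ - ℓ|) := by
        linarith
    _ ≤ ρ * (α jstar * ℓ + β jstar) + μ * (α 0 - α k) * |τ - ℓ| := hfinal
end
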